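/- If the feasible set S of the root problem is nonempty and S = ⋃ᵢ Sᵢ is a finite cover by subproblem feasible sets, then the union of the Pareto fronts of the subproblems, after removing dominated elements, equals the Pareto front of the root problem, provided each subproblem's Pareto front is computed exactly. -/

import Mathlib

/-- `u` strictly dominates `v` (for minimization): `u ≤ v` componentwise and `u ≠ v`. -/
def Dominates {p : ℕ} (u v : Fin p → ℝ) : Prop := (∀ k, u k ≤ v k) ∧ u ≠ v

/-- The Pareto front of the feasible set `T` under objective `f`. -/
def ParetoFront {α : Type*} {p : ℕ} (f : α → Fin p → ℝ) (T : Set α) : Set (Fin p → ℝ) :=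
  {v | (∃ x ∈ T, f x = v) ∧ ¬∃ x ∈ T, Dominates (f x) v}

lemma dominates_iff_lt {p : ℕ} (u v : Fin p → ℝ) : Dominates u v ↔ u < v := by
  rw [lt_iff_le_and_ne]
  exact and_congr (by simp [Pi.le_def]) Iff.rfl

/-- In a set with finite image, every point is weakly dominated by a Pareto point. -/
lemma exists_pareto_le {α : Type*} {p : ℕ} (f : α → Fin p → ℝ) (T : Set α)
    (hfin : (f '' T).Finite) {x : α} (hx : x ∈ T) :
    ∃ w ∈ ParetoFront f T, w ≤ f x := by
  set A : Set (Fin p → ℝ) := {u ∈ f '' T | u ≤ f x} with hA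
  have hAfin : A.Finite := hfin.subset (fun u hu => hu.1)
  have hAne : A.Nonempty := ⟨f x, ⟨x, hx, rfl⟩, le_refl _⟩
  obtain ⟨m, hm, hmin⟩ := Set.Finite.exists_minimalFor id A hAfin hAne
  obtain ⟨⟨y, hy, hfy⟩, hmx⟩ := hm
  refine ⟨m, ⟨⟨y, hy, hfy⟩, ?_⟩, hmx⟩
  rintro ⟨z, hz, hdom⟩
  rw [dominates_iff_lt] at hdom
  have hzA : f z ∈ A := ⟨⟨z, hz, rfl⟩, hdom.le.trans hmx⟩
  exact absurd (hmin hzA hdom.le) hdom.not_ge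

theorem stmt_15 {α : Type*} {p : ℕ} (f : α → Fin p → ℝ)
    {ι : Type*} [Finite ι] (S : Set α) (Si : ι → Set α)
    (hS : S.Nonempty) (hcover : S = ⋃ i, Si i)
    (hfin : (f '' S).Finite) :
    {v ∈ ⋃ i, ParetoFront f (Si i) |
      ¬∃ u ∈ ⋃ i, ParetoFront f (Si i), Dominates u v} = ParetoFront f S := by
  have hsub : ∀ i, Si i ⊆ S := fun i => hcover ▸ Set.subset_iUnion Si i
  have hfin' : ∀ i, (f '' Si i).Finite :=
    fun i => hfin.subset (Set.image_mono (f := f) (hsub i))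
  ext v
  constructor
  · rintro ⟨hv, hnd⟩
    obtain ⟨_, ⟨i, rfl⟩, ⟨x, hxSi, hfx⟩, _⟩ := hv
    refine ⟨⟨x, hsub i hxSi, hfx⟩, ?_⟩
    rintro ⟨y, hyS, hdom⟩
    rw [hcover] at hyS
    obtain ⟨_, ⟨j, rfl⟩, hySj⟩ := hyS
    obtain ⟨w, hwP, hwle⟩ := exists_pareto_le f (Si j) (hfin' j) hySj
    refine hnd ⟨w, Set.mem_iUnion.2 ⟨j, hwP⟩, ?_⟩
    rw [dominates_iff_lt] at hdom ⊢
    exact lt_of_le_of_lt hwle hdom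
  · rintro ⟨⟨x, hxS, hfx⟩, hnd⟩
    have hxS' := hxS
    rw [hcover] at hxS'
    obtain ⟨_, ⟨i, rfl⟩, hxSi⟩ := hxS'
    have hnd' : ¬∃ u ∈ ⋃ i, ParetoFront f (Si i), Dominates u v := by
      rintro ⟨u, hu, hdom⟩
      obtain ⟨_, ⟨j, rfl⟩, ⟨y, hySj, hfy⟩, _⟩ := hu
      exact hnd ⟨y, hsub j hySj, hfy ▸ hdom⟩
    refine ⟨Set.mem_iUnion.2 ⟨i, ⟨x, hxSi, hfx⟩, ?_⟩, hnd'⟩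
    rintro ⟨z, hzSi, hdom⟩
    exact hnd ⟨z, hsub i hzSi, hdom⟩
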